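/- For every monic irreducible polynomial f of degree mn over F_q, the number of mn×mn matrices T over F_q that are (m,n)-block companion and have characteristic polynomial f equals N(α,m,n;q)/(q^{mn}-1), where α is any root of f in F_{q^{mn}} and N(α,m,n;q) is the number of ordered bases of F_{q^{mn}} of the form (v_1,...,v_m, αv_1,...,αv_m, ..., α^{n-1}v_1,...,α^{n-1}v_m). -/

import Mathlib

open Polynomial

/-- An (m,n)-block companion matrix: identity blocks on the block subdiagonal,
arbitrary m×m blocks in the last block column, zeros elsewhere. -/
def IsBlockCompanion {F : Type*} [Field F] {m n : ℕ}
    (T : Matrix (Fin n × Fin m) (Fin n × Fin m) F) : Prop :=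
  ∃ C : Fin n → Matrix (Fin m) (Fin m) F,
    ∀ (i j : Fin n) (a b : Fin m),
      T (i, a) (j, b) =
        if (j : ℕ) = n - 1 then C i a b
        else if (i : ℕ) = (j : ℕ) + 1 then (if a = b then 1 else 0) else 0

section Aux

variable {F K : Type*} [Field F] [Field K] [Algebra F K]
variable {ι : Type*} [Fintype ι] [DecidableEq ι]

theorem matLift_aux (f : F[X]) (T : Matrix ι ι F) (hT : aeval T f = 0) :
    ∀ a ∈ Ideal.span {f}, (aeval T) a = 0 := by
  intro a ha
  rw [Ideal.mem_span_singleton] at ha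
  obtain ⟨g, rfl⟩ := ha
  rw [map_mul, hT, zero_mul]

noncomputable def matLift (f : F[X]) (T : Matrix ι ι F) (hT : aeval T f = 0) :
    AdjoinRoot f →ₐ[F] Matrix ι ι F :=
  Ideal.Quotient.liftₐ (Ideal.span {f}) (Polynomial.aeval T) (matLift_aux f T hT)

theorem matLift_mk (f : F[X]) (T : Matrix ι ι F) (hT : aeval T f = 0) (g : F[X]) :
    matLift f T hT (AdjoinRoot.mk f g) = aeval T g :=
  DFunLike.congr_fun (Ideal.Quotient.liftₐ_comp (Ideal.span {f}) (Polynomial.aeval T)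
    (matLift_aux f T hT)) g

theorem matLift_root (f : F[X]) (T : Matrix ι ι F) (hT : aeval T f = 0) :
    matLift f T hT (AdjoinRoot.root f) = T := by
  rw [AdjoinRoot.root, matLift_mk]; simp

/-- Surjectivity of evaluation at a root of an irreducible polynomial whose degree
matches the dimension of the field extension. -/
theorem aeval_surj [FiniteDimensional F K] (f : F[X]) (hirr : Irreducible f) (α : K)
    (hα : aeval α f = 0) (hrank : Module.finrank F K = f.natDegree) :
    Function.Surjective (fun g : F[X] => aeval α g) := by
  haveI := Fact.mk hirr
  have hne : f ≠ 0 := hirr.ne_zero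
  haveI : FiniteDimensional F (AdjoinRoot f) :=
    Module.Finite.of_basis (AdjoinRoot.powerBasis hne).basis
  have hinj : Function.Injective (AdjoinRoot.liftAlgHom f (Algebra.ofId F K) α hα) :=
    RingHom.injective (AdjoinRoot.liftAlgHom f (Algebra.ofId F K) α hα).toRingHom
  have hfr : Module.finrank F (AdjoinRoot f) = Module.finrank F K := by
    rw [(AdjoinRoot.powerBasis hne).finrank, AdjoinRoot.powerBasis_dim, hrank]
  have hsurj : Function.Surjective (AdjoinRoot.liftAlgHom f (Algebra.ofId F K) α hα) :=
    (LinearMap.injective_iff_surjective_of_finrank_eq_finrank hfr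
      (f := (AdjoinRoot.liftAlgHom f (Algebra.ofId F K) α hα).toLinearMap)).mp hinj
  intro k
  obtain ⟨z, hz⟩ := hsurj k
  obtain ⟨g, rfl⟩ := AdjoinRoot.mk_surjective z
  exact ⟨g, by show aeval α g = k; rw [← hz]; rfl⟩

/-- Core of the backward direction: a matrix annihilated by `f` gives rise to a linear
equivalence of `ι → F` with `K` intertwining `T` and multiplication by `α`. -/
theorem bcore [FiniteDimensional F K] (f : F[X]) (hirr : Irreducible f) (α : K)
    (hα : aeval α f = 0) (hrank : Module.finrank F K = f.natDegree)
    (hcard : Fintype.card ι = f.natDegree) (hpos : 0 < f.natDegree)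
    (T : Matrix ι ι F) (hT : aeval T f = 0) :
    ∃ φ : (ι → F) ≃ₗ[F] K, ∀ x, φ (T.mulVec x) = α * φ x := by
  haveI := Fact.mk hirr
  have hne : f ≠ 0 := hirr.ne_zero
  haveI : FiniteDimensional F (AdjoinRoot f) :=
    Module.Finite.of_basis (AdjoinRoot.powerBasis hne).basis
  have hinj : Function.Injective (AdjoinRoot.liftAlgHom f (Algebra.ofId F K) α hα) :=
    RingHom.injective (AdjoinRoot.liftAlgHom f (Algebra.ofId F K) α hα).toRingHom
  have hfr : Module.finrank F (AdjoinRoot f) = Module.finrank F K := by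
    rw [(AdjoinRoot.powerBasis hne).finrank, AdjoinRoot.powerBasis_dim, hrank]
  have hsurj : Function.Surjective (AdjoinRoot.liftAlgHom f (Algebra.ofId F K) α hα) :=
    (LinearMap.injective_iff_surjective_of_finrank_eq_finrank hfr
      (f := (AdjoinRoot.liftAlgHom f (Algebra.ofId F K) α hα).toLinearMap)).mp hinj
  let e1 : AdjoinRoot f ≃ₐ[F] K := AlgEquiv.ofBijective _ ⟨hinj, hsurj⟩
  let ψ : K →ₐ[F] Matrix ι ι F := (matLift f T hT).comp e1.symm.toAlgHom
  have hψα : ψ α = T := by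
    have h1 : e1.symm α = AdjoinRoot.root f := by
      apply e1.injective
      rw [AlgEquiv.apply_symm_apply]
      exact (AdjoinRoot.liftAlgHom_root f (Algebra.ofId F K) α hα).symm
    show (matLift f T hT) (e1.symm α) = T
    rw [h1, matLift_root]
  let ρ : K →+* Module.End F (ι → F) :=
    ((Matrix.toLinAlgEquiv' : Matrix ι ι F ≃ₐ[F] _).toAlgHom.comp ψ).toRingHom
  letI : Module K (ι → F) := Module.compHom _ ρ
  have hsmul : ∀ (k : K) (x : ι → F), k • x = (ψ k).mulVec x := by
    intro k x
    show Matrix.toLin' (ψ k) x = _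
    rw [Matrix.toLin'_apply]
  haveI : IsScalarTower F K (ι → F) := by
    constructor
    intro a k x
    have h1 : (a • k) • x = (ψ (a • k)).mulVec x := hsmul _ _
    rw [h1, map_smul, Matrix.smul_mulVec, ← hsmul]
  haveI : Module.Finite K (ι → F) := Module.Finite.of_restrictScalars_finite F K _
  have hd : Module.finrank K (ι → F) = 1 := by
    have h2 : Module.finrank F K * Module.finrank K (ι → F) = Module.finrank F (ι → F) :=
      Module.finrank_mul_finrank F K (ι → F)
    rw [hrank, Module.finrank_pi, hcard] at h2
    have h3 : f.natDegree * Module.finrank K (ι → F) = f.natDegree * 1 := by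
      rw [mul_one]; exact h2
    exact Nat.eq_of_mul_eq_mul_left hpos h3
  obtain ⟨φK⟩ : Nonempty ((ι → F) ≃ₗ[K] K) :=
    FiniteDimensional.nonempty_linearEquiv_of_finrank_eq (by rw [hd, Module.finrank_self])
  refine ⟨φK.restrictScalars F, fun x => ?_⟩
  have h3 : T.mulVec x = α • x := by rw [hsmul, hψα]
  show φK (T.mulVec x) = α * φK x
  rw [h3, map_smul, smul_eq_mul]

end Aux

section Main

variable {F K : Type*} [Field F] [Field K] [Algebra F K]
variable {m n : ℕ}

/-- Multiplication by `α` as an `F`-linear endomorphism of `K`. -/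
noncomputable abbrev Lmul (F : Type*) [Field F] [Field K] [Algebra F K] (α : K) :
    Module.End F K := Algebra.lmul F K α

theorem Lmul_apply (α x : K) : Lmul F α x = α * x := rfl

/-- Column action of a block companion matrix on off-end standard basis vectors. -/
theorem colstep (T : Matrix (Fin n × Fin m) (Fin n × Fin m) F)
    (hbc : IsBlockCompanion T) {i : ℕ} (hi : i + 1 < n) (a : Fin m) :
    T.mulVec (Pi.single ((⟨i, by omega⟩ : Fin n), a) 1) =
      Pi.single ((⟨i + 1, hi⟩ : Fin n), a) 1 := by
  obtain ⟨C, hC⟩ := hbc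
  funext p
  obtain ⟨j, b⟩ := p
  rw [Matrix.mulVec_single]
  show T (j, b) ((⟨i, by omega⟩ : Fin n), a) * 1 = _
  rw [mul_one, hC]
  have hne : ¬ ((⟨i, by omega⟩ : Fin n) : ℕ) = n - 1 := by simp; omega
  rw [if_neg hne]
  have hiff : ((j, b) = ((⟨i + 1, hi⟩ : Fin n), a)) ↔ ((j : ℕ) = i + 1 ∧ b = a) := by
    constructor
    · intro h
      refine ⟨?_, (Prod.ext_iff.mp h).2⟩
      have := (Prod.ext_iff.mp h).1
      exact Fin.ext_iff.mp this
    · rintro ⟨h1, h2⟩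
      exact Prod.ext (Fin.ext h1) h2
  rw [Pi.single_apply]
  have hcoe : (((⟨i, by omega⟩ : Fin n)) : ℕ) = i := rfl
  rw [hcoe]
  by_cases h1 : (j : ℕ) = i + 1
  · by_cases h2 : b = a
    · rw [if_pos h1, if_pos h2, if_pos (hiff.mpr ⟨h1, h2⟩)]
    · rw [if_pos h1, if_neg h2, if_neg (fun h => h2 (hiff.mp h).2)]
  · rw [if_neg h1, if_neg (fun h => h1 (hiff.mp h).1)]

/-- Forward direction: a basis of the special shape produces a block companion matrix
with characteristic polynomial `f`. -/
theorem forward [FiniteDimensional F K] (hm : 0 < m) (hn : 0 < n)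
    (hK : Module.finrank F K = m * n)
    (f : F[X]) (hf : f.Monic) (hirr : Irreducible f) (hdeg : f.natDegree = m * n)
    (α : K) (hα : aeval α f = 0)
    (v : Fin m → K) (b : Module.Basis (Fin n × Fin m) F K)
    (hb : ∀ p : Fin n × Fin m, b p = α ^ (p.1 : ℕ) * v p.2) :
    IsBlockCompanion (LinearMap.toMatrix b b (Lmul F α)) ∧
      (LinearMap.toMatrix b b (Lmul F α)).charpoly = f := by
  constructor
  · refine ⟨fun i a c => LinearMap.toMatrix b b (Lmul F α) (i, a) (⟨n - 1, by omega⟩, c),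
      fun i j a c => ?_⟩
    by_cases hj : (j : ℕ) = n - 1
    · rw [if_pos hj]
      have hj2 : j = (⟨n - 1, by omega⟩ : Fin n) := Fin.ext_iff.mpr hj
      rw [hj2]
    · rw [if_neg hj]
      have hlt : (j : ℕ) + 1 < n := by have := j.isLt; omega
      rw [LinearMap.toMatrix_apply]
      have h1 : Lmul F α (b (j, c)) = b ((⟨(j : ℕ) + 1, hlt⟩ : Fin n), c) := by
        rw [Lmul_apply, hb, hb]
        show α * (α ^ (j : ℕ) * v c) = α ^ ((j : ℕ) + 1) * v c
        rw [← mul_assoc, ← pow_succ']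
      rw [h1, b.repr_self, Finsupp.single_apply]
      by_cases h2 : (i : ℕ) = (j : ℕ) + 1
      · by_cases h3 : a = c
        · rw [if_pos h2, if_pos h3, if_pos]
          exact Prod.ext (Fin.ext h2.symm) h3.symm
        · rw [if_pos h2, if_neg h3, if_neg]
          intro h
          exact h3 (congrArg Prod.snd h).symm
      · rw [if_neg h2, if_neg]
        intro h
        exact h2 ((Fin.ext_iff.mp (congrArg Prod.fst h)).symm)
  · rw [LinearMap.charpoly_toMatrix]
    have hmon : (Lmul F α).charpoly.Monic := LinearMap.charpoly_monic _
    have hdeg' : (Lmul F α).charpoly.natDegree = m * n := by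
      rw [LinearMap.charpoly_natDegree, hK]
    have hroot : aeval α ((Lmul F α).charpoly) = 0 := by
      have h0 : aeval (Lmul F α) ((Lmul F α).charpoly) = 0 :=
        LinearMap.aeval_self_charpoly _
      have h1 : aeval ((Algebra.lmul F K) α) ((Lmul F α).charpoly) =
          (Algebra.lmul F K) (aeval α ((Lmul F α).charpoly)) :=
        Polynomial.aeval_algHom_apply (Algebra.lmul F K) α _
      rw [show aeval (Lmul F α) ((Lmul F α).charpoly) =
        aeval ((Algebra.lmul F K) α) ((Lmul F α).charpoly) from rfl, h1] at h0
      have := DFunLike.congr_fun h0 (1 : K)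
      simpa [Lmul_apply] using this
    have hmin : minpoly F α = f := (minpoly.eq_of_irreducible_of_monic hirr hα hf).symm ▸ rfl
    have hdvd : f ∣ (Lmul F α).charpoly := by
      rw [← hmin]
      exact minpoly.dvd F α hroot
    obtain ⟨g, hg⟩ := hdvd
    have hfne : f ≠ 0 := hirr.ne_zero
    have hcne : (Lmul F α).charpoly ≠ 0 := hmon.ne_zero
    have hgne : g ≠ 0 := by rintro rfl; rw [mul_zero] at hg; exact hcne hg
    have hdg : g.natDegree = 0 := by
      have := Polynomial.natDegree_mul hfne hgne
      rw [← hg, hdeg', hdeg] at this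
      omega
    have hgmon : g.Monic := hf.of_mul_monic_left (hg ▸ hmon)
    have hg1 : g = 1 := hgmon.natDegree_eq_zero.mp hdg
    rw [hg, hg1, mul_one]

/-- Backward direction: any block companion matrix with characteristic polynomial `f`
arises from a basis of the special shape. -/
theorem backward [FiniteDimensional F K] (hm : 0 < m) (hn : 0 < n)
    (hK : Module.finrank F K = m * n)
    (f : F[X]) (hf : f.Monic) (hirr : Irreducible f) (hdeg : f.natDegree = m * n)
    (α : K) (hα : aeval α f = 0)
    (T : Matrix (Fin n × Fin m) (Fin n × Fin m) F)
    (hbc : IsBlockCompanion T) (hcp : T.charpoly = f) :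
    ∃ (v : Fin m → K) (b : Module.Basis (Fin n × Fin m) F K),
      (∀ p : Fin n × Fin m, b p = α ^ (p.1 : ℕ) * v p.2) ∧
        LinearMap.toMatrix b b (Lmul F α) = T := by
  have hT : aeval T f = 0 := by rw [← hcp]; exact Matrix.aeval_self_charpoly T
  have hcard : Fintype.card (Fin n × Fin m) = f.natDegree := by
    simp [hdeg, mul_comm]
  obtain ⟨φ, hφ⟩ := bcore f hirr α hα (by rw [hK, hdeg]) hcard (by rw [hdeg]; positivity) T hT
  let b : Module.Basis (Fin n × Fin m) F K := (Pi.basisFun F (Fin n × Fin m)).map φ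
  have hbp : ∀ p : Fin n × Fin m, b p = φ (Pi.single p 1) := by
    intro p
    simp [b, Module.Basis.map_apply]
  have hrep : ∀ (x : K) (p : Fin n × Fin m), b.repr x p = φ.symm x p := by
    intro x p
    simp [b, Module.Basis.map_repr]
  refine ⟨fun a => φ (Pi.single ((⟨0, hn⟩ : Fin n), a) 1), b, ?_, ?_⟩
  · rintro ⟨i, a⟩
    obtain ⟨iv, hiv⟩ := i
    show b (⟨iv, hiv⟩, a) = α ^ iv * φ (Pi.single ((⟨0, hn⟩ : Fin n), a) 1)
    induction iv with
    | zero => rw [hbp, pow_zero, one_mul]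
    | succ k ih =>
      have hk : k < n := by omega
      have h1 : φ (Pi.single ((⟨k, hk⟩ : Fin n), a) 1) =
          α ^ k * φ (Pi.single ((⟨0, hn⟩ : Fin n), a) 1) := by
        have := ih hk
        rw [hbp] at this
        exact this
      rw [hbp, ← colstep T hbc hiv a, hφ, h1, ← mul_assoc, ← pow_succ']
  · ext p q
    rw [LinearMap.toMatrix_apply, hrep, Lmul_apply, hbp, ← hφ, LinearEquiv.symm_apply_apply,
      Matrix.mulVec_single]
    simp

/-- Uniqueness up to scalar: two special-shape bases with the same matrix of
multiplication by `α` differ by a nonzero scalar. -/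
theorem uniq [FiniteDimensional F K] (hm : 0 < m) (hn : 0 < n)
    (hK : Module.finrank F K = m * n)
    (f : F[X]) (hirr : Irreducible f) (hdeg : f.natDegree = m * n)
    (α : K) (hα : aeval α f = 0)
    (v v' : Fin m → K) (b b' : Module.Basis (Fin n × Fin m) F K)
    (hb : ∀ p : Fin n × Fin m, b p = α ^ (p.1 : ℕ) * v p.2)
    (hb' : ∀ p : Fin n × Fin m, b' p = α ^ (p.1 : ℕ) * v' p.2)
    (hM : LinearMap.toMatrix b b (Lmul F α) = LinearMap.toMatrix b' b' (Lmul F α)) :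
    ∃ c : K, c ≠ 0 ∧ ∀ a : Fin m, v' a = c * v a := by
  let g : K ≃ₗ[F] K := b.equiv b' (Equiv.refl _)
  have hg : ∀ p, g (b p) = b' p := fun p => b.equiv_apply p b' (Equiv.refl _)
  have hcomm0 : g.toLinearMap ∘ₗ (Lmul F α) = (Lmul F α) ∘ₗ g.toLinearMap := by
    apply b.ext
    intro q
    show g (Lmul F α (b q)) = Lmul F α (g (b q))
    conv_lhs => rw [← Matrix.toLin_toMatrix b b (Lmul F α), Matrix.toLin_self]
    conv_rhs => rw [hg, ← Matrix.toLin_toMatrix b' b' (Lmul F α), Matrix.toLin_self]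
    rw [map_sum]
    simp only [map_smul, hg, hM]
  have hcomm : ∀ x, g (α * x) = α * g x := by
    intro x
    have := DFunLike.congr_fun hcomm0 x
    simpa [Lmul_apply] using this
  have hpow : ∀ (k : ℕ) (x : K), g (α ^ k * x) = α ^ k * g x := by
    intro k
    induction k with
    | zero => intro x; simp
    | succ k ih =>
      intro x
      have h1 : α ^ (k + 1) * x = α * (α ^ k * x) := by ring
      have h2 : α ^ (k + 1) * g x = α * (α ^ k * g x) := by ring
      rw [h1, h2, hcomm, ih]
  have hpoly : ∀ (p : F[X]) (x : K), g (aeval α p * x) = aeval α p * g x := by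
    intro p
    induction p using Polynomial.induction_on with
    | C a =>
      intro x
      rw [aeval_C, ← Algebra.smul_def, map_smul, Algebra.smul_def]
    | add p q hp hq =>
      intro x
      rw [map_add, add_mul, map_add, hp, hq, add_mul]
    | monomial k a _ =>
      intro x
      have h1 : aeval α (C a * X ^ (k + 1)) = algebraMap F K a * α ^ (k + 1) := by
        rw [map_mul, aeval_C, map_pow, aeval_X]
      rw [h1, mul_assoc, ← Algebra.smul_def, map_smul, hpow, Algebra.smul_def, mul_assoc]
  have hall : ∀ (k x : K), g (k * x) = k * g x := by
    intro k x
    obtain ⟨p, hp⟩ := aeval_surj f hirr α hα (by rw [hK, hdeg]) k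
    rw [← hp]
    exact hpoly p x
  refine ⟨g 1, ?_, ?_⟩
  · intro h0
    have : (1 : K) = 0 := g.injective (by rw [h0, map_zero])
    exact one_ne_zero this
  · intro a
    have h1 : b' ((⟨0, hn⟩ : Fin n), a) = v' a := by rw [hb']; simp
    have h2 : b ((⟨0, hn⟩ : Fin n), a) = v a := by rw [hb]; simp
    have h3 : g (v a) = v' a := by rw [← h2, hg, h1]
    rw [← h3]
    calc g (v a) = g (v a * 1) := by rw [mul_one]
    _ = v a * g 1 := hall _ _
    _ = g 1 * v a := mul_comm _ _

/-- Scaling: multiplying a special-shape basis by a nonzero scalar preserves the shape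
and the matrix. -/
theorem scaling (α : K) (v : Fin m → K) (b : Module.Basis (Fin n × Fin m) F K)
    (hb : ∀ p : Fin n × Fin m, b p = α ^ (p.1 : ℕ) * v p.2) (c : K) (hc : c ≠ 0) :
    ∃ b2 : Module.Basis (Fin n × Fin m) F K,
      (∀ p : Fin n × Fin m, b2 p = α ^ (p.1 : ℕ) * (c * v p.2)) ∧
        LinearMap.toMatrix b2 b2 (Lmul F α) = LinearMap.toMatrix b b (Lmul F α) := by
  let u : Kˣ := Units.mk0 c hc
  let e : K ≃ₗ[F] K :=
    (LinearEquiv.smulOfUnit (M := K) u).restrictScalars F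
  have he : ∀ x : K, e x = c * x := fun x => rfl
  have hes : ∀ x : K, e.symm x = (u⁻¹ : Kˣ) • x := fun x => rfl
  refine ⟨b.map e, ?_, ?_⟩
  · intro p
    rw [Module.Basis.map_apply, he, hb, mul_left_comm]
  · ext p q
    rw [LinearMap.toMatrix_apply, LinearMap.toMatrix_apply, Module.Basis.map_repr]
    simp only [LinearEquiv.trans_apply]
    have harg : e.symm (Lmul F α ((b.map e) q)) = Lmul F α (b q) := by
      rw [Module.Basis.map_apply, Lmul_apply, Lmul_apply, he, hes,
        show α * (c * b q) = c * (α * b q) by ring]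
      show u⁻¹ • (u • (α * b q)) = α * b q
      rw [inv_smul_smul]
    rw [harg]
end Main

/-- For f monic irreducible of degree mn with root α, the number of
(m,n)-block companion matrices with characteristic polynomial f equals
N(α,m,n;q)/(q^{mn}-1); stated multiplied through by (q^{mn}-1). -/
theorem stmt_19 (F : Type*) [Field F] [Fintype F] (q : ℕ) (hq : q = Fintype.card F)
    (m n : ℕ) (hm : 0 < m) (hn : 0 < n)
    (K : Type*) [Field K] [Algebra F K] [FiniteDimensional F K]
    (hK : Module.finrank F K = m * n)
    (f : Polynomial F) (hf : f.Monic) (hirr : Irreducible f)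
    (hdeg : f.natDegree = m * n)
    (α : K) (hα : Polynomial.aeval α f = 0) :
    (q ^ (m * n) - 1) * Nat.card {T : Matrix (Fin n × Fin m) (Fin n × Fin m) F //
        IsBlockCompanion T ∧ Matrix.charpoly T = f} =
      Nat.card {v : Fin m → K //
        ∃ b : Module.Basis (Fin n × Fin m) F K,
          ∀ p : Fin n × Fin m, b p = α ^ (p.1 : ℕ) * v p.2} := by
  classical
  haveI : Finite K := Module.finite_of_finite F
  haveI : Fintype K := Fintype.ofFinite K
  set St := {T : Matrix (Fin n × Fin m) (Fin n × Fin m) F //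
      IsBlockCompanion T ∧ Matrix.charpoly T = f} with hSt
  set Sv := {v : Fin m → K //
      ∃ b : Module.Basis (Fin n × Fin m) F K,
        ∀ p : Fin n × Fin m, b p = α ^ (p.1 : ℕ) * v p.2} with hSv
  -- section: for each T ∈ St choose a v and basis
  have hsec : ∀ T : St, ∃ (v : Fin m → K) (b : Module.Basis (Fin n × Fin m) F K),
      (∀ p : Fin n × Fin m, b p = α ^ (p.1 : ℕ) * v p.2) ∧
        LinearMap.toMatrix b b (Lmul F α) = T.1 :=
    fun T => backward hm hn hK f hf hirr hdeg α hα T.1 T.2.1 T.2.2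
  choose vs bs hbs hms using hsec
  -- the bijection
  have key : ∀ (c : Kˣ) (T : St),
      (∃ b : Module.Basis (Fin n × Fin m) F K,
        ∀ p : Fin n × Fin m, b p = α ^ (p.1 : ℕ) * ((c : K) * vs T p.2)) := by
    intro c T
    obtain ⟨b2, hb2, -⟩ := scaling α (vs T) (bs T) (hbs T) (c : K) c.ne_zero
    exact ⟨b2, hb2⟩
  let Θ : Kˣ × St → Sv := fun x => ⟨fun a => (x.1 : K) * vs x.2 a, by
    obtain ⟨b2, hb2⟩ := key x.1 x.2
    exact ⟨b2, hb2⟩⟩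
  have hinj : Function.Injective Θ := by
    rintro ⟨c, T⟩ ⟨c', T'⟩ h
    have hfun : ∀ a, (c : K) * vs T a = (c' : K) * vs T' a :=
      fun a => congrFun (congrArg Subtype.val h) a
    -- both scaled bases represent the same vector tuple, so the matrices agree
    obtain ⟨b2, hb2, hm2⟩ := scaling α (vs T) (bs T) (hbs T) (c : K) c.ne_zero
    obtain ⟨b2', hb2', hm2'⟩ := scaling α (vs T') (bs T') (hbs T') (c' : K) c'.ne_zero
    have hbb : b2 = b2' := by
      apply Module.Basis.eq_of_apply_eq
      intro p
      rw [hb2, hb2', hfun]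
    have hTT : T.1 = T'.1 := by
      rw [← hms T, ← hms T', ← hm2, ← hm2', hbb]
    have hTT' : T = T' := Subtype.ext hTT
    subst hTT'
    have hv0 : vs T ⟨0, hm⟩ ≠ 0 := by
      intro h0
      have := hbs T ((⟨0, hn⟩ : Fin n), (⟨0, hm⟩ : Fin m))
      rw [h0, mul_zero] at this
      exact (bs T).ne_zero _ this
    have hcc : (c : K) = (c' : K) :=
      mul_right_cancel₀ hv0 (by rw [hfun])
    have : c = c' := Units.ext hcc
    rw [this]
  have hsurj : Function.Surjective Θ := by
    rintro ⟨v, b, hb⟩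
    have hfor := forward hm hn hK f hf hirr hdeg α hα v b hb
    let T : St := ⟨LinearMap.toMatrix b b (Lmul F α), hfor⟩
    have hMe : LinearMap.toMatrix (bs T) (bs T) (Lmul F α) =
        LinearMap.toMatrix b b (Lmul F α) := hms T
    obtain ⟨c, hc, hca⟩ := uniq hm hn hK f hirr hdeg α hα (vs T) v (bs T) b
      (hbs T) hb hMe
    refine ⟨(Units.mk0 c hc, T), ?_⟩
    apply Subtype.ext
    funext a
    exact (hca a).symm
  have hcardeq : Nat.card Sv = Nat.card (Kˣ × St) :=
    (Nat.card_congr (Equiv.ofBijective Θ ⟨hinj, hsurj⟩)).symm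
  rw [hcardeq, Nat.card_prod]
  congr 1
  rw [Nat.card_eq_fintype_card, Fintype.card_units]
  have : Fintype.card K = q ^ (m * n) := by
    rw [hq, ← hK]
    exact Module.card_eq_pow_finrank
  rw [this]
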